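/- Let α ∈ (0,1), ε ∈ (0,1), and n ∈ ℕ. Define l_n = min{k ∈ {0,...,n} : (n+1)·b(n,α,k) > ε} − 1, where b(n,α,k) = C(n,k) α^k (1-α)^{n-k}. If the set {k : (n+1)·b(n,α,k) > ε} is nonempty (which holds whenever ε < 1), then l_n < α·n. -/

import Mathlib

/-- The binomial probability mass function `b(n,p,x) = C(n,x) p^x (1-p)^(n-x)`. -/
noncomputable def binomPMF (n : ℕ) (p : ℝ) (x : ℕ) : ℝ :=
  (n.choose x : ℝ) * p ^ x * (1 - p) ^ (n - x)

lemma binomPMF_step (n : ℕ) (α : ℝ) (hα0 : 0 < α) (hα1 : α < 1) (j : ℕ) (hj : j + 1 ≤ n)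
    (h : ((n : ℝ) + 1) * α ≤ (j : ℝ) + 1) :
    binomPMF n α (j + 1) ≤ binomPMF n α j := by
  have h1α : 0 < 1 - α := by linarith
  have hkey : (n.choose (j + 1) : ℝ) * α ≤ (n.choose j : ℝ) * (1 - α) := by
    have hid := Nat.choose_succ_right_eq n j
    have hid' : (n.choose (j + 1) : ℝ) * ((j : ℝ) + 1) = (n.choose j : ℝ) * ((n : ℝ) - j) := by
      have := congrArg (fun m : ℕ => (m : ℝ)) hid
      push_cast at this
      rw [Nat.cast_sub (by omega)] at this
      push_cast at this
      linarith [this]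
    have hc : (0 : ℝ) ≤ (n.choose j : ℝ) := Nat.cast_nonneg _
    have hineq : ((n : ℝ) - j) * α ≤ (1 - α) * ((j : ℝ) + 1) := by nlinarith
    have hjpos : (0 : ℝ) < (j : ℝ) + 1 := by positivity
    rw [← mul_le_mul_iff_of_pos_right hjpos]
    calc (n.choose (j + 1) : ℝ) * α * ((j : ℝ) + 1)
        = (n.choose (j + 1) : ℝ) * ((j : ℝ) + 1) * α := by ring
      _ = (n.choose j : ℝ) * (((n : ℝ) - j) * α) := by rw [hid']; ring
      _ ≤ (n.choose j : ℝ) * ((1 - α) * ((j : ℝ) + 1)) := by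
          exact mul_le_mul_of_nonneg_left hineq hc
      _ = (n.choose j : ℝ) * (1 - α) * ((j : ℝ) + 1) := by ring
  unfold binomPMF
  have hnj : n - j = (n - (j + 1)) + 1 := by omega
  rw [hnj, pow_succ, pow_succ]
  have hpos : (0 : ℝ) ≤ α ^ j * (1 - α) ^ (n - (j + 1)) := by positivity
  calc (n.choose (j + 1) : ℝ) * (α ^ j * α) * (1 - α) ^ (n - (j + 1))
      = ((n.choose (j + 1) : ℝ) * α) * (α ^ j * (1 - α) ^ (n - (j + 1))) := by ring
    _ ≤ ((n.choose j : ℝ) * (1 - α)) * (α ^ j * (1 - α) ^ (n - (j + 1))) :=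
        mul_le_mul_of_nonneg_right hkey hpos
    _ = (n.choose j : ℝ) * α ^ j * ((1 - α) ^ (n - (j + 1)) * (1 - α)) := by ring

open Finset in
/-- The CSM lower boundary `l_n = min{k : (n+1) b(n,α,k) > ε} − 1` satisfies `l_n < α n`,
provided the set `{k ∈ {0,…,n} : (n+1) b(n,α,k) > ε}` is nonempty. -/
theorem stmt4 (α ε : ℝ) (hα : α ∈ Set.Ioo (0:ℝ) 1) (hε : ε ∈ Set.Ioo (0:ℝ) 1) (n : ℕ)
    (S : Finset ℕ)
    (hS : S = {k ∈ Finset.range (n + 1) | ε < ((n : ℝ) + 1) * binomPMF n α k})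
    (hne : S.Nonempty) :
    ((S.min' hne : ℝ) - 1 : ℝ) < α * n := by
  obtain ⟨hα0, hα1⟩ := hα
  by_contra hcon
  push_neg at hcon
  have hln : α * n + 1 ≤ ((S.min' hne : ℕ) : ℝ) := by linarith
  have hl1 : 1 ≤ ((S.min' hne : ℕ) : ℝ) := by nlinarith [Nat.cast_nonneg (α := ℝ) n]
  have hl1' : 1 ≤ S.min' hne := by exact_mod_cast hl1
  obtain ⟨j, hlj⟩ : ∃ j, S.min' hne = j + 1 := ⟨S.min' hne - 1, by omega⟩
  rw [hlj] at hln
  have hmem : (j + 1) ∈ S := hlj ▸ S.min'_mem hne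
  rw [hS, Finset.mem_filter, Finset.mem_range] at hmem
  obtain ⟨hrange, hgt⟩ := hmem
  have hjn : j + 1 ≤ n := by omega
  -- j is not in S
  have hjnot : j ∉ S := fun hjS => by
    have := S.min'_le j hjS
    rw [hlj] at this
    omega
  have hjle : ((n : ℝ) + 1) * binomPMF n α j ≤ ε := by
    by_contra hx
    push_neg at hx
    exact hjnot (by rw [hS]; exact Finset.mem_filter.mpr ⟨Finset.mem_range.mpr (by omega), hx⟩)
  have hstepcond : ((n : ℝ) + 1) * α ≤ (j : ℝ) + 1 := by
    push_cast at hln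
    nlinarith
  have hstep := binomPMF_step n α hα0 hα1 j hjn hstepcond
  have hn1 : (0 : ℝ) < (n : ℝ) + 1 := by positivity
  push_cast at hgt
  nlinarith
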